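/- Let U be the doubly-infinite shift matrix U_{jk} = δ_{j,k+1}, and let E(α) denote the extended CMV matrix of the sequence (α_j)_{j∈ℤ}. Then U* E(α)^t U = E(α'), where α'_j = α_{j-1}; i.e., the conjugated transpose of a CMV matrix by the shift is again a CMV matrix with shifted coefficients. Similarly, U E(α)^t U* = E(α'') with α''_j = α_{j+1}. -/

import Mathlib

open scoped ComplexConjugate

/-- `ρ_j = √(1 - |α_j|²)`. -/
noncomputable def alRho (α : ℤ → ℂ) (j : ℤ) : ℝ := Real.sqrt (1 - ‖α j‖ ^ 2)

/-- `L̃ = ⊕_{j even} Θ_j`, where `Θ_j = [[conj α_j, ρ_j],[ρ_j, -α_j]]` acts on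
coordinates `j, j+1`. -/
noncomputable def cmvL (α : ℤ → ℂ) (j k : ℤ) : ℂ :=
  if Even j then
    (if k = j then conj (α j) else if k = j + 1 then (alRho α j : ℂ) else 0)
  else
    (if k = j - 1 then (alRho α (j - 1) : ℂ) else if k = j then -α (j - 1) else 0)

/-- `M̃ = ⊕_{j odd} Θ_j`. -/
noncomputable def cmvM (α : ℤ → ℂ) (j k : ℤ) : ℂ :=
  if Odd j then
    (if k = j then conj (α j) else if k = j + 1 then (alRho α j : ℂ) else 0)
  else
    (if k = j - 1 then (alRho α (j - 1) : ℂ) else if k = j then -α (j - 1) else 0)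

/-- The extended CMV matrix `E = L̃ M̃`; the row of `L̃` at `j` is supported in
`{j-1, j, j+1}`, so the matrix product is the displayed finite sum. -/
noncomputable def cmvE (α : ℤ → ℂ) (j k : ℤ) : ℂ :=
  ∑ l ∈ Finset.Icc (j - 1) (j + 1), cmvL α j l * cmvM α l k

/-- Entries of powers `E^n`; the row of `E` at `j` is supported in
`[j-2, j+2]`, so the matrix product is the displayed finite sum. -/
noncomputable def cmvEpow (α : ℤ → ℂ) : ℕ → ℤ → ℤ → ℂ
  | 0, j, k => if j = k then 1 else 0
  | n + 1, j, k => ∑ l ∈ Finset.Icc (j - 2) (j + 2), cmvE α j l * cmvEpow α n l k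

set_option linter.unreachableTactic false
set_option linter.unusedTactic false

lemma shiftL (α : ℤ → ℂ) (j l : ℤ) :
    cmvL (fun m => α (m - 1)) j l = cmvM α (l - 1) (j - 1) := by
  unfold cmvL cmvM alRho
  simp only [Int.even_iff, Int.odd_iff]
  split_ifs <;>
  first
    | rfl
    | (exfalso; omega)
    | (have h' : l = j := by omega
       subst h'
       first | rfl | (ring_nf; done))
    | (have h' : l = j + 1 := by omega
       subst h'
       first | rfl | (ring_nf; done))
    | (have h' : l = j - 1 := by omega
       subst h'
       first | rfl | (ring_nf; done))

lemma shiftM (α : ℤ → ℂ) (l k : ℤ) :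
    cmvM (fun m => α (m - 1)) l k = cmvL α (k - 1) (l - 1) := by
  unfold cmvL cmvM alRho
  simp only [Int.even_iff, Int.odd_iff]
  split_ifs <;>
  first
    | rfl
    | (exfalso; omega)
    | (have h' : k = l := by omega
       subst h'
       first | rfl | (ring_nf; done))
    | (have h' : k = l + 1 := by omega
       subst h'
       first | rfl | (ring_nf; done))
    | (have h' : k = l - 1 := by omega
       subst h'
       first | rfl | (ring_nf; done))


lemma cmvL_zero (α : ℤ → ℂ) {a b : ℤ} (h : b < a - 1 ∨ a + 1 < b) : cmvL α a b = 0 := by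
  unfold cmvL
  split_ifs <;> first | rfl | (exfalso; omega)

lemma cmvM_zero (α : ℤ → ℂ) {a b : ℤ} (h : b < a - 1 ∨ a + 1 < b) : cmvM α a b = 0 := by
  unfold cmvM
  split_ifs <;> first | rfl | (exfalso; omega)

lemma sum_swap_supp (f : ℤ → ℂ) (s t : Finset ℤ)
    (ha : ∀ m ∈ t, m ∉ s → f m = 0)
    (hb : ∀ m ∈ s, m ∉ t → f m = 0) :
    ∑ m ∈ s, f m = ∑ m ∈ t, f m := by
  have e1 : ∑ m ∈ s, f m = ∑ m ∈ s ∪ t, f m :=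
    Finset.sum_subset Finset.subset_union_left
      (fun x hx hxn => ha x ((Finset.mem_union.mp hx).resolve_left hxn) hxn)
  have e2 : ∑ m ∈ t, f m = ∑ m ∈ s ∪ t, f m :=
    Finset.sum_subset Finset.subset_union_right
      (fun x hx hxn => hb x ((Finset.mem_union.mp hx).resolve_right hxn) hxn)
  rw [e1, e2]

lemma cmvE_shift (α : ℤ → ℂ) (j k : ℤ) :
    cmvE (fun m => α (m - 1)) j k = cmvE α (k - 1) (j - 1) := by
  unfold cmvE
  have h1 : ∀ l, cmvL (fun m => α (m - 1)) j l * cmvM (fun m => α (m - 1)) l k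
      = cmvL α (k - 1) (l - 1) * cmvM α (l - 1) (j - 1) := by
    intro l; rw [shiftL, shiftM]; ring
  simp only [h1]
  have hmap : Finset.Icc (j - 1) (j + 1)
      = (Finset.Icc (j - 2) j).map (addRightEmbedding 1) := by
    rw [Finset.map_add_right_Icc]; congr 1 <;> ring
  rw [hmap, Finset.sum_map]
  simp only [addRightEmbedding_apply, add_sub_cancel_right]
  apply sum_swap_supp
  · intro m _ hm
    simp only [Finset.mem_Icc, not_and_or, not_le] at hm
    rw [cmvM_zero α (a := m) (b := j - 1) (by omega)]
    ring
  · intro m _ hm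
    simp only [Finset.mem_Icc, not_and_or, not_le] at hm
    rw [cmvL_zero α (a := k - 1) (b := m) (by omega)]
    ring



/-- Let `U` be the doubly-infinite shift matrix
`U_{jk} = δ_{j,k+1}`. Conjugating the transpose of the extended CMV matrix by
`U` gives the extended CMV matrix of shifted coefficients:
`(U* E(α)^t U)_{jk} = E(α)^t_{j-1,k-1} = E(α)_{k-1,j-1}` equals
`E(α')_{jk}` with `α'_j = α_{j-1}`, and similarly
`(U E(α)^t U*)_{jk} = E(α)_{k+1,j+1}` equals `E(α'')_{jk}` with
`α''_j = α_{j+1}`. -/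
theorem cmvE_shift_transpose (α : ℤ → ℂ) (hα : ∀ j, ‖α j‖ < 1) :
    (∀ j k : ℤ, cmvE (fun m => α (m - 1)) j k = cmvE α (k - 1) (j - 1)) ∧
    (∀ j k : ℤ, cmvE (fun m => α (m + 1)) j k = cmvE α (k + 1) (j + 1)) := by
  constructor
  · exact fun j k => cmvE_shift α j k
  · intro j k
    have h := cmvE_shift (fun m => α (m + 1)) (k + 1) (j + 1)
    have hfun : (fun m => (fun m => α (m + 1)) (m - 1)) = α := by
      funext m; simp
    rw [hfun] at h
    simpa using h.symm
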